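/- Let W_1 ∈ ℝ^{h×d_x}, W_2 ∈ ℝ^{d_y×h}, let Σ_x ∈ ℝ^{d_x×d_x} be symmetric positive semidefinite, and for x ∈ ℝ^{d_x}, y ∈ ℝ^{d_y} let ℓ(x,y,W_2,W_1) = ½‖y − W_2 W_1 x‖². Then for every x and y, the trace of the full Hessian of ℓ with respect to the concatenated parameters (W_1, W_2) equals Tr(W_2ᵀW_2)·‖x‖² + d_y·xᵀW_1ᵀW_1 x. Consequently, if x is a random vector with E[xxᵀ] = Σ_x, then T(W_2,W_1) := E[Tr ∇²ℓ] = ‖W_2‖_F²·Tr(Σ_x) + d_y·Tr(W_1ᵀ W_1 Σ_x). -/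

import Mathlib

open Matrix MeasureTheory

/-- The parameter space of a two-layer linear network: the entries of
`W₁ ∈ ℝ^{h×dx}` and `W₂ ∈ ℝ^{dy×h}`, concatenated into one vector. -/
abbrev TwoLayerParams (h dx dy : ℕ) := ((Fin h × Fin dx) ⊕ (Fin dy × Fin h)) → ℝ

/-- The first-layer weight matrix encoded in a parameter vector. -/
def firstLayer {h dx dy : ℕ} (θ : TwoLayerParams h dx dy) : Matrix (Fin h) (Fin dx) ℝ :=
  Matrix.of fun i j => θ (Sum.inl (i, j))

/-- The second-layer weight matrix encoded in a parameter vector. -/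
def secondLayer {h dx dy : ℕ} (θ : TwoLayerParams h dx dy) : Matrix (Fin dy) (Fin h) ℝ :=
  Matrix.of fun i j => θ (Sum.inr (i, j))

/-- The loss `ℓ(x,y,W₂,W₁) = ½‖y − W₂W₁x‖²` as a function of the parameter vector. -/
noncomputable def twoLayerLoss {h dx dy : ℕ} (x : Fin dx → ℝ) (y : Fin dy → ℝ)
    (θ : TwoLayerParams h dx dy) : ℝ :=
  (1 / 2) * ∑ i, (y i - ((secondLayer θ * firstLayer θ).mulVec x) i) ^ 2

/-- The trace of the Hessian of `g : ℝ^ι → ℝ` at `θ`: the sum of the pure second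
derivatives along the coordinate directions. -/
noncomputable def hessianTrace {ι : Type*} [Fintype ι] [DecidableEq ι]
    (g : (ι → ℝ) → ℝ) (θ : ι → ℝ) : ℝ :=
  ∑ b : ι, iteratedFDeriv ℝ 2 g θ ![Pi.single b 1, Pi.single b 1]

section Aux

lemma deriv2_quadratic (A B C : ℝ) :
    deriv (deriv (fun t : ℝ => A * t ^ 2 + B * t + C)) 0 = 2 * A := by
  have h1 : deriv (fun t : ℝ => A * t ^ 2 + B * t + C) = fun t => 2 * A * t + B := by
    funext t
    have : HasDerivAt (fun t : ℝ => A * t ^ 2 + B * t + C) (2 * A * t + B) t := by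
      have := (((hasDerivAt_pow 2 t).const_mul A).add ((hasDerivAt_id t).const_mul B)).add_const C
      exact this.congr_deriv (by norm_num; ring)
    exact this.deriv
  rw [h1]
  have : HasDerivAt (fun t : ℝ => 2 * A * t + B) (2 * A) 0 := by
    simpa using ((hasDerivAt_id (0:ℝ)).const_mul (2*A)).add_const B
  simpa using this.deriv

lemma second_line {ι : Type*} [Fintype ι] (g : (ι → ℝ) → ℝ) (hg : ContDiff ℝ 2 g)
    (θ v : ι → ℝ) :
    iteratedFDeriv ℝ 2 g θ ![v, v] = deriv (deriv (fun t : ℝ => g (θ + t • v))) 0 := by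
  have hline : ∀ t : ℝ, HasDerivAt (fun s : ℝ => θ + s • v) v t := by
    intro t
    simpa using ((hasDerivAt_id t).smul_const v).const_add θ
  have hgd : Differentiable ℝ g := hg.differentiable (by norm_num)
  have hinner : deriv (fun s : ℝ => g (θ + s • v)) = fun t => fderiv ℝ g (θ + t • v) v := by
    funext t
    exact ((hgd (θ + t • v)).hasFDerivAt.comp_hasDerivAt t (hline t)).deriv
  rw [hinner]
  have hF : ContDiff ℝ 1 (fderiv ℝ g) := hg.fderiv_right (by norm_num)
  have hFd := (hF.differentiable (by norm_num) θ).hasFDerivAt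
  have houter : HasDerivAt (fun t : ℝ => fderiv ℝ g (θ + t • v) v)
      (fderiv ℝ (fderiv ℝ g) θ v v) 0 := by
    have h1 : HasDerivAt (fun t : ℝ => fderiv ℝ g (θ + t • v))
        (fderiv ℝ (fderiv ℝ g) θ v) 0 := by
      have h0 : θ = θ + (0:ℝ) • v := by simp
      rw [h0] at hFd
      have h2 := hFd.comp_hasDerivAt 0 (hline 0)
      simp only [zero_smul, add_zero] at h2
      exact h2
    exact ((ContinuousLinearMap.apply ℝ ℝ v).hasFDerivAt.comp_hasDerivAt 0 h1)
  rw [houter.deriv, iteratedFDeriv_two_apply]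
  simp

lemma quad_line (n : ℕ) (r a : Fin n → ℝ) :
    deriv (deriv (fun t : ℝ => (1/2) * ∑ i, (r i - t * a i)^2)) 0 = ∑ i, (a i)^2 := by
  have hfun : (fun t : ℝ => (1/2) * ∑ i, (r i - t * a i)^2)
      = fun t => ((1/2) * ∑ i, (a i)^2) * t^2 + (-∑ i, r i * a i) * t
          + ((1/2) * ∑ i, (r i)^2) := by
    funext t
    simp only [Finset.mul_sum, Finset.sum_mul, neg_mul, ← Finset.sum_neg_distrib,
      ← Finset.sum_add_distrib]
    exact Finset.sum_congr rfl fun i _ => by ring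
  rw [hfun, deriv2_quadratic]
  rw [Finset.mul_sum, ← Finset.mul_sum]
  ring

lemma loss_contDiff {h dx dy : ℕ} (x : Fin dx → ℝ) (y : Fin dy → ℝ) :
    ContDiff ℝ 2 (twoLayerLoss (h := h) (dy := dy) x y) := by
  unfold twoLayerLoss secondLayer firstLayer
  simp only [Matrix.mulVec, Matrix.mul_apply, dotProduct, Matrix.of_apply]
  apply ContDiff.mul contDiff_const
  apply ContDiff.sum; intro i _
  apply ContDiff.pow
  apply ContDiff.sub contDiff_const
  apply ContDiff.sum; intro n _
  apply ContDiff.mul _ contDiff_const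
  apply ContDiff.sum; intro m _
  exact (contDiff_apply ℝ ℝ (Sum.inr (i, m))).mul (contDiff_apply ℝ ℝ (Sum.inl (m, n)))

lemma pred_inl {h dx dy : ℕ} (θ : TwoLayerParams h dx dy) (x : Fin dx → ℝ) (t : ℝ)
    (k : Fin h) (j : Fin dx) (i : Fin dy) :
    ((secondLayer (θ + t • (Pi.single (Sum.inl (k, j)) 1 : TwoLayerParams h dx dy)) *
        firstLayer (θ + t • (Pi.single (Sum.inl (k, j)) 1 : TwoLayerParams h dx dy))).mulVec x) i
      = ((secondLayer θ * firstLayer θ).mulVec x) i + t * (secondLayer θ i k * x j) := by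
  simp only [Matrix.mulVec, Matrix.mul_apply, dotProduct, Matrix.of_apply, secondLayer,
    firstLayer, Pi.add_apply, Pi.smul_apply, Pi.single_apply, smul_eq_mul]
  simp only [Sum.inr.injEq, Sum.inl.injEq, Prod.mk.injEq, reduceCtorEq, if_false,
    mul_zero, add_zero, mul_ite, mul_one, ite_and]
  simp only [mul_add, Finset.sum_add_distrib, add_mul, Finset.sum_ite_eq, Finset.sum_ite_eq',
    Finset.mem_univ, if_true]
  congr 1
  have hsum : ∀ n : Fin dx,
      (∑ m, θ (Sum.inr (i, m)) * if m = k then if n = j then t else 0 else 0)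
        = (if n = j then θ (Sum.inr (i, k)) * t else 0) := by
    intro n; simp [mul_ite]
  simp only [hsum, ite_mul, zero_mul, Finset.sum_ite_eq', Finset.mem_univ, if_true]
  ring

lemma pred_inr {h dx dy : ℕ} (θ : TwoLayerParams h dx dy) (x : Fin dx → ℝ) (t : ℝ)
    (i0 : Fin dy) (k : Fin h) (i : Fin dy) :
    ((secondLayer (θ + t • (Pi.single (Sum.inr (i0, k)) 1 : TwoLayerParams h dx dy)) *
        firstLayer (θ + t • (Pi.single (Sum.inr (i0, k)) 1 : TwoLayerParams h dx dy))).mulVec x) i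
      = ((secondLayer θ * firstLayer θ).mulVec x) i
        + t * (if i = i0 then ((firstLayer θ).mulVec x) k else 0) := by
  simp only [Matrix.mulVec, Matrix.mul_apply, dotProduct, Matrix.of_apply, secondLayer,
    firstLayer, Pi.add_apply, Pi.smul_apply, Pi.single_apply, smul_eq_mul]
  simp only [Sum.inr.injEq, Sum.inl.injEq, Prod.mk.injEq, reduceCtorEq, if_false,
    mul_zero, add_zero, mul_ite, mul_one, ite_and]
  simp only [add_mul, Finset.sum_add_distrib, Finset.sum_ite_eq, Finset.sum_ite_eq',
    Finset.mem_univ, if_true]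
  congr 1
  by_cases hi : i = i0 <;> simp [hi, Finset.mul_sum, mul_comm, mul_assoc, mul_left_comm]

lemma trace_tmul {dy h : ℕ} (W : Matrix (Fin dy) (Fin h) ℝ) :
    (Wᵀ * W).trace = ∑ k, ∑ i, (W i k)^2 := by
  simp only [Matrix.trace, Matrix.mul_apply, Matrix.diag, Matrix.transpose_apply, pow_two]

lemma dot_tmul {hn dx : ℕ} (W : Matrix (Fin hn) (Fin dx) ℝ) (x : Fin dx → ℝ) :
    x ⬝ᵥ (Wᵀ * W).mulVec x = ∑ k, (W.mulVec x k)^2 := by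
  simp only [Matrix.mulVec, Matrix.mul_apply, dotProduct, Matrix.transpose_apply, pow_two]
  simp only [Finset.sum_mul, Finset.mul_sum]
  have h1 : ∀ n : Fin dx, (∑ k : Fin dx, ∑ i : Fin hn, x n * (W i n * W i k * x k))
      = ∑ i : Fin hn, ∑ k : Fin dx, x n * (W i n * W i k * x k) := fun n => Finset.sum_comm
  simp only [h1]
  rw [show (∑ n : Fin dx, ∑ i : Fin hn, ∑ k : Fin dx, x n * (W i n * W i k * x k))
      = ∑ i : Fin hn, ∑ n : Fin dx, ∑ k : Fin dx, x n * (W i n * W i k * x k) from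
    Finset.sum_comm]
  refine Finset.sum_congr rfl fun i _ => Finset.sum_congr rfl fun n _ =>
    Finset.sum_congr rfl fun k _ => by ring

lemma hessianTrace_loss {h dx dy : ℕ} (x : Fin dx → ℝ) (y : Fin dy → ℝ)
    (θ : TwoLayerParams h dx dy) :
    hessianTrace (twoLayerLoss x y) θ
      = ((secondLayer θ)ᵀ * secondLayer θ).trace * (∑ j, x j ^ 2)
        + dy * (x ⬝ᵥ ((firstLayer θ)ᵀ * firstLayer θ).mulVec x) := by
  have hg := loss_contDiff (h := h) (dy := dy) x y
  unfold hessianTrace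
  rw [Fintype.sum_sum_type]
  have hinl : ∀ p : Fin h × Fin dx,
      iteratedFDeriv ℝ 2 (twoLayerLoss x y) θ
          ![Pi.single (Sum.inl p) 1, Pi.single (Sum.inl p) 1]
        = ∑ i, (secondLayer θ i p.1 * x p.2)^2 := by
    rintro ⟨k, j⟩
    rw [second_line _ hg]
    have hfun : (fun t : ℝ => twoLayerLoss x y
          (θ + t • (Pi.single (Sum.inl (k, j)) 1 : TwoLayerParams h dx dy)))
        = fun t => (1/2) * ∑ i, ((y i - ((secondLayer θ * firstLayer θ).mulVec x) i)
            - t * (secondLayer θ i k * x j))^2 := by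
      funext t
      unfold twoLayerLoss
      congr 1
      refine Finset.sum_congr rfl fun i _ => ?_
      rw [pred_inl]
      ring
    rw [hfun, quad_line]
  have hinr : ∀ p : Fin dy × Fin h,
      iteratedFDeriv ℝ 2 (twoLayerLoss x y) θ
          ![Pi.single (Sum.inr p) 1, Pi.single (Sum.inr p) 1]
        = (((firstLayer θ).mulVec x) p.2)^2 := by
    rintro ⟨i0, k⟩
    rw [second_line _ hg]
    have hfun : (fun t : ℝ => twoLayerLoss x y
          (θ + t • (Pi.single (Sum.inr (i0, k)) 1 : TwoLayerParams h dx dy)))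
        = fun t => (1/2) * ∑ i, ((y i - ((secondLayer θ * firstLayer θ).mulVec x) i)
            - t * (if i = i0 then ((firstLayer θ).mulVec x) k else 0))^2 := by
      funext t
      unfold twoLayerLoss
      congr 1
      refine Finset.sum_congr rfl fun i _ => ?_
      rw [pred_inr]
      ring
    rw [hfun, quad_line]
    simp [ite_pow, apply_ite (fun z : ℝ => z^2)]
  simp only [hinl, hinr]
  rw [Fintype.sum_prod_type, Fintype.sum_prod_type]
  dsimp only
  rw [trace_tmul, dot_tmul]
  congr 1
  · -- first layer direction sum = trace(W2ᵀW2) * ∑ x j ^2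
    simp only [Finset.sum_mul, Finset.mul_sum, mul_pow]
    exact Finset.sum_comm
  · -- second layer direction sum
    rw [Finset.sum_const, Finset.card_univ, Fintype.card_fin, nsmul_eq_mul, Finset.mul_sum]

end Aux

/-- For `ℓ(x,y,W₂,W₁) = ½‖y − W₂W₁x‖²`, the trace of the Hessian in all parameters is
`Tr(W₂ᵀW₂)‖x‖² + d_y·xᵀW₁ᵀW₁x`; consequently for a random input `x` with
`E[xxᵀ] = Σ_x`, the expected Hessian trace is `‖W₂‖_F²·TrΣ_x + d_y·Tr(W₁ᵀW₁Σ_x)`. -/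
theorem twoLayer_hessian_trace {h dx dy : ℕ}
    {Ω : Type*} [MeasurableSpace Ω] (μ : Measure Ω) [IsProbabilityMeasure μ]
    (X : Ω → Fin dx → ℝ) (Y : Ω → Fin dy → ℝ)
    (hXmeas : ∀ i, Measurable fun ω => X ω i)
    (hXint : ∀ i j, Integrable (fun ω => X ω i * X ω j) μ)
    (Sx : Matrix (Fin dx) (Fin dx) ℝ)
    (hCov : ∀ i j, ∫ ω, X ω i * X ω j ∂μ = Sx i j) :
    (∀ (x : Fin dx → ℝ) (y : Fin dy → ℝ) (θ : TwoLayerParams h dx dy),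
        hessianTrace (twoLayerLoss x y) θ
          = ((secondLayer θ)ᵀ * secondLayer θ).trace * (∑ j, x j ^ 2)
            + dy * (x ⬝ᵥ ((firstLayer θ)ᵀ * firstLayer θ).mulVec x))
    ∧ (∀ θ : TwoLayerParams h dx dy,
        ∫ ω, hessianTrace (twoLayerLoss (X ω) (Y ω)) θ ∂μ
          = (∑ i, ∑ j, (secondLayer θ i j) ^ 2) * Sx.trace
            + dy * ((firstLayer θ)ᵀ * firstLayer θ * Sx).trace) := by
  refine ⟨fun x y θ => hessianTrace_loss x y θ, fun θ => ?_⟩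
  set T2 : ℝ := ((secondLayer θ)ᵀ * secondLayer θ).trace with hT2
  set M : Matrix (Fin dx) (Fin dx) ℝ := (firstLayer θ)ᵀ * firstLayer θ with hM
  have hrw : (fun ω => hessianTrace (twoLayerLoss (X ω) (Y ω)) θ)
      = fun ω => (∑ j, T2 * (X ω j * X ω j))
          + ∑ i, ∑ j, (dy : ℝ) * (M i j * (X ω i * X ω j)) := by
    funext ω
    rw [hessianTrace_loss]
    simp only [← hT2, ← hM, Matrix.mulVec, dotProduct, Finset.mul_sum, pow_two]
    congr 1
    refine Finset.sum_congr rfl fun i _ => Finset.sum_congr rfl fun j _ => by ring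
  rw [hrw]
  have hint1 : Integrable (fun ω => ∑ j, T2 * (X ω j * X ω j)) μ :=
    integrable_finset_sum _ fun j _ => (hXint j j).const_mul T2
  have hint2 : Integrable (fun ω => ∑ i, ∑ j, (dy : ℝ) * (M i j * (X ω i * X ω j))) μ :=
    integrable_finset_sum _ fun i _ => integrable_finset_sum _ fun j _ =>
      ((hXint i j).const_mul (M i j)).const_mul (dy : ℝ)
  rw [integral_add hint1 hint2, integral_finset_sum _ fun j _ => (hXint j j).const_mul T2,
    integral_finset_sum _ fun i _ => integrable_finset_sum _ fun j _ =>
      ((hXint i j).const_mul (M i j)).const_mul (dy : ℝ)]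
  have hSymm : ∀ i j, Sx i j = Sx j i := by
    intro i j
    rw [← hCov i j, ← hCov j i]
    exact integral_congr_ae (Filter.Eventually.of_forall fun ω => mul_comm _ _)
  have e1 : ∑ j, ∫ ω, T2 * (X ω j * X ω j) ∂μ = T2 * Sx.trace := by
    simp only [integral_const_mul, hCov, Matrix.trace, Matrix.diag, Finset.mul_sum]
  have e2 : ∀ i, ∫ ω, ∑ j, (dy : ℝ) * (M i j * (X ω i * X ω j)) ∂μ
      = ∑ j, (dy : ℝ) * (M i j * Sx i j) := by
    intro i
    rw [integral_finset_sum _ fun j _ => ((hXint i j).const_mul (M i j)).const_mul (dy : ℝ)]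
    simp only [integral_const_mul, hCov]
  simp only [e1, e2]
  congr 1
  · rw [hT2, trace_tmul]
    congr 1
    exact Finset.sum_comm
  · have htr : ((firstLayer θ)ᵀ * firstLayer θ * Sx).trace
        = ∑ i, ∑ j, M i j * Sx j i := by
      simp only [hM, Matrix.trace, Matrix.diag, Matrix.mul_apply]
    rw [htr, Finset.mul_sum]
    refine Finset.sum_congr rfl fun i _ => ?_
    rw [Finset.mul_sum]
    refine Finset.sum_congr rfl fun j _ => ?_
    rw [hSymm i j]
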